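/- Let U be Uniform(0,1) and, conditional on U = t, let Y_{n-m} be Binomial(n-m, 1-t²). Suppose n → ∞, m → ∞ with n/(n-m) → c for some c > 1. Then E[(n-m)/(m + Y_{n-m})] converges to ∫₀¹ dt/(c - t²) = coth⁻¹(√c)/√c. -/

import Mathlib

open MeasureTheory Filter

noncomputable def bpmf (N k : ℕ) (x : ℝ) : ℝ :=
  (N.choose k : ℝ) * (1 - x ^ 2) ^ k * (x ^ 2) ^ (N - k)

lemma bpmf_cont (N k : ℕ) : Continuous (bpmf N k) := by unfold bpmf; fun_prop

lemma bpmf_intOn (N k : ℕ) : IntegrableOn (bpmf N k) (Set.Ioo 0 1) :=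
  ((bpmf_cont N k).continuousOn.integrableOn_compact isCompact_Icc).mono_set
    Set.Ioo_subset_Icc_self

noncomputable def fcm (c : ℝ) (hc : 1 < c) : C(unitInterval, ℝ) :=
  ⟨fun t => (c - 1 + (t : ℝ))⁻¹, by
    apply (continuous_const.add continuous_subtype_val).inv₀
    intro t
    have h1 := t.2.1
    show c - 1 + (t : ℝ) ≠ 0
    nlinarith [t.2.1]⟩

lemma L1 {Ω : Type*} [MeasureSpace Ω] (μ : Measure Ω) [IsProbabilityMeasure μ] (N M : ℕ)
    (Y : Ω → ℕ) (hY : Measurable Y) (hYle : ∀ ω, Y ω ≤ N)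
    (hlaw : ∀ k ≤ N, (μ (Y ⁻¹' {k})).toReal = ∫ x in Set.Ioo (0:ℝ) 1, bpmf N k x) :
    ∫ ω, (N:ℝ)/((M:ℝ) + (Y ω:ℝ)) ∂μ
      = ∫ x in Set.Ioo (0:ℝ) 1,
          ∑ k ∈ Finset.range (N+1), bpmf N k x * ((N:ℝ)/((M:ℝ)+(k:ℝ))) := by
  have h1 : ∀ ω, (N:ℝ)/((M:ℝ) + (Y ω:ℝ))
      = ∑ k ∈ Finset.range (N+1),
          Set.indicator (Y ⁻¹' {k}) (fun _ => (N:ℝ)/((M:ℝ)+(k:ℝ))) ω := by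
    intro ω
    rw [Finset.sum_eq_single_of_mem (Y ω)
      (Finset.mem_range.2 (Nat.lt_succ_of_le (hYle ω)))]
    · rw [Set.indicator_of_mem (by simp)]
    · intro k _ hk
      exact Set.indicator_of_notMem (by simp [Ne.symm hk]) _
  simp_rw [h1]
  rw [integral_finset_sum _ (fun k _ =>
    (integrable_const _).indicator (hY (measurableSet_singleton k)))]
  have h2 : ∀ k ∈ Finset.range (N+1),
      (∫ ω, Set.indicator (Y ⁻¹' {k}) (fun _ => (N:ℝ)/((M:ℝ)+(k:ℝ))) ω ∂μ)
        = ∫ x in Set.Ioo (0:ℝ) 1, bpmf N k x * ((N:ℝ)/((M:ℝ)+(k:ℝ))) := by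
    intro k hk
    rw [integral_indicator_const _ (hY (measurableSet_singleton k)), smul_eq_mul,
      measureReal_def, hlaw k (Nat.lt_succ_iff.1 (Finset.mem_range.1 hk)), ← integral_mul_const]
  rw [Finset.sum_congr rfl h2,
    ← integral_finset_sum _ (fun k _ => ((bpmf_intOn N k).mul_const _))]

lemma L2 (c : ℝ) (hc : 1 < c) (N M : ℕ) (hN : 0 < N)
    (ha2 : (c-1)/2 ≤ (M:ℝ)/(N:ℝ)) (x : ℝ) (hx : x ∈ Set.Ioo (0:ℝ) 1) :
    |(∑ k ∈ Finset.range (N+1), bpmf N k x * ((N:ℝ)/((M:ℝ)+(k:ℝ)))) - 1/(c - x^2)|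
      ≤ |(M:ℝ)/(N:ℝ) - (c-1)| * (2/((c-1)*(c-1)))
        + ‖bernsteinApproximation N (fcm c hc) - fcm c hc‖ := by
  obtain ⟨hx0, hx1⟩ := hx
  have hc1 : (0:ℝ) < c - 1 := by linarith
  have hNpos : (0:ℝ) < N := by exact_mod_cast hN
  set a : ℝ := (M:ℝ)/(N:ℝ) with ha
  have hapos : 0 < a := lt_of_lt_of_le (by positivity) ha2
  have hpI : (1 - x^2) ∈ unitInterval := by constructor <;> nlinarith
  set pt : unitInterval := ⟨1 - x^2, hpI⟩ with hpt
  set ε : ℝ := |a - (c-1)| * (2/((c-1)*(c-1))) with hε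
  have key : ∀ k ∈ Finset.range (N+1),
      |(N:ℝ)/((M:ℝ)+(k:ℝ)) - (c - 1 + (k:ℝ)/(N:ℝ))⁻¹| ≤ ε := by
    intro k _
    set t : ℝ := (k:ℝ)/(N:ℝ) with htdef
    have ht0 : 0 ≤ t := by positivity
    have hat : 0 < a + t := by linarith
    have hct : 0 < c - 1 + t := by linarith
    have hEq : (N:ℝ)/((M:ℝ)+(k:ℝ)) = (a + t)⁻¹ := by
      rw [ha, htdef, ← add_div, inv_div]
    rw [hEq, inv_sub_inv hat.ne' hct.ne']
    have hnum : c - 1 + t - (a + t) = (c-1) - a := by ring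
    rw [hnum, abs_div, abs_of_pos (mul_pos hat hct), abs_sub_comm, div_eq_mul_inv, hε]
    apply mul_le_mul_of_nonneg_left _ (abs_nonneg _)
    have hlow : (c-1)/2 * (c-1) ≤ (a + t) * (c - 1 + t) := by nlinarith
    have h2 : ((a + t) * (c - 1 + t))⁻¹ ≤ ((c-1)/2 * (c-1))⁻¹ :=
      inv_anti₀ (by positivity) hlow
    calc ((a + t) * (c - 1 + t))⁻¹ ≤ ((c-1)/2 * (c-1))⁻¹ := h2
      _ = 2/((c-1)*(c-1)) := by field_simp
  have hb0 : ∀ k, 0 ≤ bpmf N k x := by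
    intro k
    exact mul_nonneg (mul_nonneg (by positivity) (pow_nonneg (by nlinarith) k))
      (pow_nonneg (sq_nonneg x) _)
  have hsum : (∑ k ∈ Finset.range (N+1), bpmf N k x) = 1 := by
    have h := add_pow (1 - x^2) (x^2) N
    simp only [sub_add_cancel, one_pow] at h
    conv_rhs => rw [h]
    exact Finset.sum_congr rfl fun k _ => by unfold bpmf; ring
  have hB : bernsteinApproximation N (fcm c hc) pt
      = ∑ k ∈ Finset.range (N+1), (c - 1 + (k:ℝ)/(N:ℝ))⁻¹ * bpmf N k x := by
    rw [bernsteinApproximation.apply]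
    rw [← Fin.sum_univ_eq_sum_range (fun k => (c - 1 + (k:ℝ)/(N:ℝ))⁻¹ * bpmf N k x) (N+1)]
    apply Finset.sum_congr rfl
    intro k _
    rw [bernstein_apply]
    rw [smul_eq_mul, mul_comm _ (fcm c hc (bernstein.z k))]
    show (c - 1 + ((bernstein.z k : ℝ)))⁻¹ * _ = _
    have hz : (bernstein.z k : ℝ) = ((k:ℕ):ℝ)/(N:ℝ) := rfl
    rw [hz]
    unfold bpmf
    show _ * ((N.choose k : ℝ) * (pt:ℝ)^(k:ℕ) * (1 - (pt:ℝ))^(N - k)) = _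
    have hptv : (pt : ℝ) = 1 - x^2 := rfl
    rw [hptv]
    ring_nf
  set S := ∑ k ∈ Finset.range (N+1), bpmf N k x * ((N:ℝ)/((M:ℝ)+(k:ℝ))) with hS
  set B := ∑ k ∈ Finset.range (N+1), (c - 1 + (k:ℝ)/(N:ℝ))⁻¹ * bpmf N k x with hBdef
  have step1 : |S - B| ≤ ε := by
    have hd : S - B = ∑ k ∈ Finset.range (N+1),
        bpmf N k x * ((N:ℝ)/((M:ℝ)+(k:ℝ)) - (c - 1 + (k:ℝ)/(N:ℝ))⁻¹) := by
      rw [hS, hBdef, ← Finset.sum_sub_distrib]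
      exact Finset.sum_congr rfl fun k _ => by ring
    rw [hd]
    calc |∑ k ∈ Finset.range (N+1), bpmf N k x * ((N:ℝ)/((M:ℝ)+(k:ℝ)) - (c - 1 + (k:ℝ)/(N:ℝ))⁻¹)|
        ≤ ∑ k ∈ Finset.range (N+1), |bpmf N k x * ((N:ℝ)/((M:ℝ)+(k:ℝ)) - (c - 1 + (k:ℝ)/(N:ℝ))⁻¹)| :=
          Finset.abs_sum_le_sum_abs _ _
      _ ≤ ∑ k ∈ Finset.range (N+1), bpmf N k x * ε := by
          apply Finset.sum_le_sum
          intro k hk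
          rw [abs_mul, abs_of_nonneg (hb0 k)]
          exact mul_le_mul_of_nonneg_left (key k hk) (hb0 k)
      _ = ε := by rw [← Finset.sum_mul, hsum, one_mul]
  have hfpt : fcm c hc pt = 1/(c - x^2) := by
    show (c - 1 + (1 - x^2))⁻¹ = _
    rw [one_div]
    congr 1
    ring
  have step2 : |B - 1/(c - x^2)| ≤ ‖bernsteinApproximation N (fcm c hc) - fcm c hc‖ := by
    rw [← hB, ← hfpt]
    have := ContinuousMap.norm_coe_le_norm (bernsteinApproximation N (fcm c hc) - fcm c hc) pt
    simpa [Real.norm_eq_abs] using this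
  calc |S - 1/(c - x^2)| ≤ |S - B| + |B - 1/(c - x^2)| := abs_sub_le _ _ _
    _ ≤ ε + ‖bernsteinApproximation N (fcm c hc) - fcm c hc‖ := add_le_add step1 step2

lemma target_intOn (c : ℝ) (hc : 1 < c) :
    IntegrableOn (fun x : ℝ => 1 / (c - x ^ 2)) (Set.Ioo 0 1) := by
  have cont : ContinuousOn (fun x : ℝ => 1 / (c - x ^ 2)) (Set.Icc (0:ℝ) 1) := by
    apply ContinuousOn.div continuousOn_const (by fun_prop)
    intro x hx
    rw [Set.mem_Icc] at hx
    nlinarith [hx.1, hx.2]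
  exact (cont.integrableOn_compact isCompact_Icc).mono_set Set.Ioo_subset_Icc_self

lemma stepD (c : ℝ) (hc : 1 < c) :
    ∫ x in Set.Ioo (0 : ℝ) 1, 1 / (c - x ^ 2) =
        Real.log ((Real.sqrt c + 1) / (Real.sqrt c - 1)) / (2 * Real.sqrt c) := by
  have hsc : 1 < Real.sqrt c := by
    have := Real.lt_sqrt (x := 1) (y := c) (by norm_num)
    simpa using this.mpr (by simpa using hc)
  have hsc0 : 0 < Real.sqrt c := by linarith
  set s := Real.sqrt c with hs
  have hssq : s ^ 2 = c := Real.sq_sqrt (by linarith : (0:ℝ) ≤ c)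
  have key : ∀ x ∈ Set.uIcc (0:ℝ) 1, HasDerivAt
      (fun x => (Real.log (s + x) - Real.log (s - x)) / (2 * s)) (1 / (c - x ^ 2)) x := by
    intro x hx
    rw [Set.uIcc_of_le (by norm_num : (0:ℝ) ≤ 1), Set.mem_Icc] at hx
    have h1 : 0 < s + x := by linarith [hx.1]
    have h2 : 0 < s - x := by linarith [hx.2]
    have d1 : HasDerivAt (fun x => Real.log (s + x)) (1/(s+x)) x := by
      have := (Real.hasDerivAt_log h1.ne').comp x ((hasDerivAt_id x).const_add s)
      simpa [one_div, Function.comp_def] using this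
    have d2 : HasDerivAt (fun x => Real.log (s - x)) (-(1/(s-x))) x := by
      have := (Real.hasDerivAt_log h2.ne').comp x ((hasDerivAt_id x).neg.const_add s)
      simpa [one_div, Function.comp_def] using this
    have := ((d1.sub d2).div_const (2 * s))
    refine this.congr_deriv ?_
    have hcx : c - x ^ 2 = (s + x) * (s - x) := by nlinarith [hssq]
    rw [hcx]
    field_simp
    ring
  have cont : ContinuousOn (fun x : ℝ => 1 / (c - x ^ 2)) (Set.uIcc (0:ℝ) 1) := by
    apply ContinuousOn.div continuousOn_const (by fun_prop)
    intro x hx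
    rw [Set.uIcc_of_le (by norm_num : (0:ℝ) ≤ 1), Set.mem_Icc] at hx
    nlinarith [hx.1, hx.2]
  have hint : IntervalIntegrable (fun x : ℝ => 1 / (c - x ^ 2)) volume 0 1 :=
    cont.intervalIntegrable
  have := intervalIntegral.integral_eq_sub_of_hasDerivAt key hint
  rw [intervalIntegral.integral_of_le (by norm_num : (0:ℝ) ≤ 1)] at this
  rw [← MeasureTheory.integral_Ioc_eq_integral_Ioo, this]
  rw [Real.log_div (by linarith) (by linarith)]
  simp

/-- Let `U` be Uniform(0,1) and, conditional on `U = t`, let `Y_j` be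
Binomial(n_j - m_j, 1 - t²) (this joint law is expressed by `hlaw`).  If
`n_j, m_j → ∞` with `n_j/(n_j - m_j) → c > 1`, then
`E[(n_j - m_j)/(m_j + Y_j)] → ∫₀¹ dt/(c - t²) = coth⁻¹(√c)/√c`. -/
theorem stmt13 {Ω : Type*} [MeasureSpace Ω] (μ : Measure Ω) [IsProbabilityMeasure μ]
    (n m : ℕ → ℕ) (hnm : ∀ j, 2 ≤ m j ∧ m j < n j)
    (hm : Tendsto m atTop atTop) (hn : Tendsto n atTop atTop)
    (c : ℝ) (hc : 1 < c)
    (hratio : Tendsto (fun j => (n j : ℝ) / ((n j : ℝ) - (m j : ℝ))) atTop (nhds c))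
    (U : Ω → ℝ) (hU : Measurable U)
    (hUunif : Measure.map U μ = (volume : Measure ℝ).restrict (Set.Ioo 0 1))
    (Y : ℕ → Ω → ℕ) (hY : ∀ j, Measurable (Y j)) (hYle : ∀ j ω, Y j ω ≤ n j - m j)
    (hlaw : ∀ j k, k ≤ n j - m j → ∀ s : Set ℝ, MeasurableSet s →
      (μ {ω | U ω ∈ s ∧ Y j ω = k}).toReal =
        ∫ x in s ∩ Set.Ioo 0 1,
          ((n j - m j).choose k : ℝ) * (1 - x ^ 2) ^ k * (x ^ 2) ^ (n j - m j - k)) :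
    Tendsto (fun j => ∫ ω, ((n j : ℝ) - (m j : ℝ)) / ((m j : ℝ) + (Y j ω : ℝ)) ∂μ) atTop
        (nhds (∫ x in Set.Ioo (0 : ℝ) 1, 1 / (c - x ^ 2))) ∧
      ∫ x in Set.Ioo (0 : ℝ) 1, 1 / (c - x ^ 2) =
        Real.log ((Real.sqrt c + 1) / (Real.sqrt c - 1)) / (2 * Real.sqrt c) := by
  refine ⟨?_, stepD c hc⟩
  have hc1 : (0:ℝ) < c - 1 := by linarith
  have hlt : ∀ j, m j < n j := fun j => (hnm j).2
  have hNpos : ∀ j, 0 < n j - m j := fun j => Nat.sub_pos_of_lt (hlt j)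
  have hcast : ∀ j, ((n j - m j : ℕ):ℝ) = (n j:ℝ) - (m j:ℝ) :=
    fun j => Nat.cast_sub (hlt j).le
  have hNR : ∀ j, (0:ℝ) < ((n j - m j : ℕ):ℝ) := fun j => by exact_mod_cast hNpos j
  -- expectation formula
  have hEq : ∀ j, (∫ ω, ((n j : ℝ) - (m j : ℝ)) / ((m j : ℝ) + (Y j ω : ℝ)) ∂μ)
      = ∫ x in Set.Ioo (0:ℝ) 1,
          ∑ k ∈ Finset.range ((n j - m j)+1),
            bpmf (n j - m j) k x * (((n j - m j:ℕ):ℝ)/((m j:ℝ)+(k:ℝ))) := by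
    intro j
    have hl : ∀ k ≤ n j - m j,
        (μ (Y j ⁻¹' {k})).toReal = ∫ x in Set.Ioo (0:ℝ) 1, bpmf (n j - m j) k x := by
      intro k hk
      have h := hlaw j k hk Set.univ MeasurableSet.univ
      have hset : {ω | U ω ∈ Set.univ ∧ Y j ω = k} = Y j ⁻¹' {k} := by
        ext ω; simp
      rw [hset, Set.univ_inter] at h
      exact h
    have := L1 μ (n j - m j) (m j) (Y j) (hY j) (hYle j) hl
    rw [← this]
    apply integral_congr_ae
    filter_upwards with ω
    rw [hcast j]
  simp only [hEq]
  -- N_j → ∞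
  have hnne : ∀ j, (n j:ℝ) ≠ 0 := fun j => by
    have h : 0 < n j := lt_trans (lt_of_lt_of_le Nat.zero_lt_two (hnm j).1) (hlt j)
    exact_mod_cast h.ne'
  have hratio' : Tendsto (fun j => ((n j:ℝ) - (m j:ℝ))/(n j:ℝ)) atTop (nhds c⁻¹) := by
    have h := hratio.inv₀ (by linarith : c ≠ 0)
    refine h.congr fun j => ?_
    rw [inv_div]
  have hNtend : Tendsto (fun j => n j - m j) atTop atTop := by
    rw [← tendsto_natCast_atTop_iff (R := ℝ)]
    have h := hratio'.pos_mul_atTop (by positivity : (0:ℝ) < c⁻¹)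
      (tendsto_natCast_atTop_iff.2 hn)
    refine h.congr fun j => ?_
    rw [hcast j, div_mul_cancel₀ _ (hnne j)]
  -- a_j → c - 1
  have ha : Tendsto (fun j => (m j:ℝ)/((n j - m j:ℕ):ℝ)) atTop (nhds (c-1)) := by
    have h := hratio.sub_const 1
    refine h.congr fun j => ?_
    rw [← hcast j]
    field_simp [(hNR j).ne']
    rw [hcast j]
    ring
  -- η_j → 0
  have hη : Tendsto (fun j => ‖bernsteinApproximation (n j - m j) (fcm c hc) - fcm c hc‖)
      atTop (nhds 0) := by
    have h1 : Tendsto (fun k => ‖bernsteinApproximation k (fcm c hc) - fcm c hc‖)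
        atTop (nhds 0) :=
      tendsto_iff_norm_sub_tendsto_zero.1 (bernsteinApproximation_uniform (fcm c hc))
    exact h1.comp hNtend
  -- ε_j → 0
  have hε : Tendsto (fun j => |(m j:ℝ)/((n j - m j:ℕ):ℝ) - (c-1)| * (2/((c-1)*(c-1))))
      atTop (nhds 0) := by
    have h := ((ha.sub_const (c-1)).abs).mul_const (2/((c-1)*(c-1)))
    simpa using h
  -- eventual bound
  have hev : ∀ᶠ j in atTop,
      |(∫ x in Set.Ioo (0:ℝ) 1,
          ∑ k ∈ Finset.range ((n j - m j)+1),
            bpmf (n j - m j) k x * (((n j - m j:ℕ):ℝ)/((m j:ℝ)+(k:ℝ))))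
        - ∫ x in Set.Ioo (0 : ℝ) 1, 1 / (c - x ^ 2)|
      ≤ |(m j:ℝ)/((n j - m j:ℕ):ℝ) - (c-1)| * (2/((c-1)*(c-1)))
        + ‖bernsteinApproximation (n j - m j) (fcm c hc) - fcm c hc‖ := by
    filter_upwards [ha.eventually_const_lt (by linarith : (c-1)/2 < c-1)] with j haj
    have hGint : IntegrableOn (fun x => ∑ k ∈ Finset.range ((n j - m j)+1),
        bpmf (n j - m j) k x * (((n j - m j:ℕ):ℝ)/((m j:ℝ)+(k:ℝ)))) (Set.Ioo (0:ℝ) 1) :=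
      integrable_finset_sum _ (fun k _ => (bpmf_intOn _ k).mul_const _)
    rw [← integral_sub hGint (target_intOn c hc)]
    have hbd : ∀ x ∈ Set.Ioo (0:ℝ) 1,
        ‖(∑ k ∈ Finset.range ((n j - m j)+1),
            bpmf (n j - m j) k x * (((n j - m j:ℕ):ℝ)/((m j:ℝ)+(k:ℝ)))) - 1/(c - x^2)‖
        ≤ |(m j:ℝ)/((n j - m j:ℕ):ℝ) - (c-1)| * (2/((c-1)*(c-1)))
          + ‖bernsteinApproximation (n j - m j) (fcm c hc) - fcm c hc‖ := by
      intro x hx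
      rw [Real.norm_eq_abs]
      exact L2 c hc (n j - m j) (m j) (hNpos j) haj.le x hx
    have := norm_setIntegral_le_of_norm_le_const (μ := volume)
      (by rw [Real.volume_Ioo]; exact ENNReal.ofReal_lt_top) hbd
    rw [Real.norm_eq_abs] at this
    calc _ ≤ _ := this
      _ ≤ _ := by
          rw [Real.volume_real_Ioo]
          norm_num
  -- squeeze
  rw [tendsto_iff_norm_sub_tendsto_zero]
  simp only [Real.norm_eq_abs]
  exact squeeze_zero' (Eventually.of_forall fun j => abs_nonneg _) hev (by simpa using hε.add hη)
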